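/- For the k-variate symmetric logistic max-stable distribution with parameter α ∈ (0,1], the extremal concurrence probability equals p = ∏_{j=1}^{k-1} (1 - α/j) = Γ(k - α)/(Γ(k)·Γ(1 - α)). -/

import Mathlib

open MeasureTheory ProbabilityTheory
open Real Set


lemma aux_Gamma_prod (α : ℝ) (hα1 : α < 1) :
    ∀ n : ℕ, Real.Gamma (n + 1 - α) = Real.Gamma (1 - α) * ∏ j ∈ Finset.range n, ((j : ℝ) + 1 - α) := by
  intro n
  induction n with
  | zero => simp
  | succ n ih =>
    have hne : (n : ℝ) + 1 - α ≠ 0 := by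
      have h0 : (0:ℝ) ≤ n := Nat.cast_nonneg n
      have : (0:ℝ) < (n:ℝ) + 1 - α := by linarith
      exact this.ne'
    have h1 : ((n : ℕ) + 1 : ℕ) + 1 - α = ((n : ℝ) + 1 - α) + 1 := by push_cast; ring
    rw [h1, Real.Gamma_add_one hne, ih, Finset.prod_range_succ]
    push_cast
    ring

lemma aux_fact_prod : ∀ n : ℕ, (Nat.factorial n : ℝ) = ∏ j ∈ Finset.range n, ((j : ℝ) + 1) := by
  intro n
  induction n with
  | zero => simp
  | succ m ih => rw [Finset.prod_range_succ, ← ih]; push_cast [Nat.factorial_succ]; ring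

lemma aux_prod_part (α : ℝ) (hα0 : 0 < α) (hα1 : α < 1) (k : ℕ) (hk : 2 ≤ k) :
    Real.Gamma (k - α) / (Real.Gamma k * Real.Gamma (1 - α))
      = ∏ j ∈ Finset.range (k - 1), (1 - α / (j + 1)) := by
  obtain ⟨n, rfl⟩ : ∃ n, k = n + 1 := ⟨k - 1, by omega⟩
  have h1 : ((n + 1 : ℕ) : ℝ) - α = (n : ℝ) + 1 - α := by push_cast; ring
  have h2 : Real.Gamma ((n+1 : ℕ) : ℝ) = Nat.factorial n := by
    push_cast
    rw [show ((n:ℝ) + 1) = ((n:ℕ):ℝ) + 1 from by push_cast; ring, Real.Gamma_nat_eq_factorial]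
  have hΓ : Real.Gamma (1 - α) > 0 := Real.Gamma_pos_of_pos (by linarith)
  rw [h1, aux_Gamma_prod α hα1 n, h2, aux_fact_prod n]
  have hsimp : (n + 1 - 1 : ℕ) = n := by omega
  rw [hsimp, mul_comm (∏ j ∈ Finset.range n, ((j:ℝ) + 1)) (Real.Gamma (1-α)),
    mul_div_mul_left _ _ hΓ.ne', ← Finset.prod_div_distrib]
  refine Finset.prod_congr rfl fun j _ => ?_
  have hj : ((j:ℝ) + 1) ≠ 0 := by positivity
  field_simp

lemma aux_lintegral_prod_indep {Ω : Type*} [MeasureSpace Ω] [IsProbabilityMeasure (ℙ : Measure Ω)]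
    {ι : Type*} (f : ι → Ω → ENNReal) (hindep : iIndepFun f ℙ)
    (hmeas : ∀ i, Measurable (f i)) (s : Finset ι) :
    ∫⁻ ω, ∏ j ∈ s, f j ω ∂ℙ = ∏ j ∈ s, ∫⁻ ω, f j ω ∂ℙ := by
  classical
  induction s using Finset.induction_on with
  | empty => simp
  | @insert i s hi ih =>
    have hmp : Measurable (∏ j ∈ s, f j) := by
      rw [Finset.prod_fn]
      exact Finset.measurable_prod s fun j _ => hmeas j
    have hind : IndepFun (∏ j ∈ s, f j) (f i) ℙ :=
      hindep.indepFun_finsetProd_of_notMem hmeas hi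
    calc ∫⁻ ω, ∏ j ∈ insert i s, f j ω ∂ℙ
        = ∫⁻ ω, ((∏ j ∈ s, f j) * f i) ω ∂ℙ := by
          congr 1; funext ω
          simp [Finset.prod_insert hi, mul_comm, Finset.prod_apply]
      _ = (∫⁻ ω, (∏ j ∈ s, f j) ω ∂ℙ) * ∫⁻ ω, f i ω ∂ℙ :=
          lintegral_mul_eq_lintegral_mul_lintegral_of_indepFun hmp (hmeas i) hind
      _ = ∏ j ∈ insert i s, ∫⁻ ω, f j ω ∂ℙ := by
          rw [Finset.prod_insert hi, ← ih, mul_comm]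
          simp [Finset.prod_apply]

lemma aux_law {Ω : Type*} [MeasureSpace Ω] [IsProbabilityMeasure (ℙ : Measure Ω)]
    (α : ℝ) (hα0 : 0 < α) (hα1 : α < 1) (X : Ω → ℝ) (hm : Measurable X)
    (hpos : ∀ᵐ ω ∂(ℙ : Measure Ω), 0 < X ω)
    (hcdf : ∀ y : ℝ, 0 < y →
      ℙ {ω | X ω < y} = ENNReal.ofReal (Real.exp (-(Real.Gamma (1 - α) * y) ^ (-(1/α))))) :
    Measure.map (fun ω => X ω ^ (-(1/α))) ℙ
      = ProbabilityTheory.expMeasure (Real.Gamma (1 - α) ^ (-(1/α))) := by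
  have hc : (0:ℝ) < Real.Gamma (1 - α) := Real.Gamma_pos_of_pos (by linarith)
  set c := Real.Gamma (1 - α) with hcdef
  set lam := c ^ (-(1/α)) with hlamdef
  have hlam : 0 < lam := Real.rpow_pos_of_pos hc _
  have hT : Measurable (fun ω => X ω ^ (-(1/α))) := by fun_prop
  have hTpos : ∀ᵐ ω ∂(ℙ : Measure Ω), 0 < X ω ^ (-(1/α)) :=
    hpos.mono fun ω hω => Real.rpow_pos_of_pos hω _
  haveI := isProbabilityMeasure_expMeasure hlam
  haveI : IsProbabilityMeasure (Measure.map (fun ω => X ω ^ (-(1/α))) ℙ) :=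
    Measure.isProbabilityMeasure_map hT.aemeasurable
  refine Measure.ext_of_Iic _ _ fun t => ?_
  have hRHS : expMeasure lam (Iic t)
      = ENNReal.ofReal (if 0 ≤ t then 1 - Real.exp (-(lam * t)) else 0) := by
    rw [← cdf_expMeasure_eq hlam, cdf_eq_real, measureReal_def,
      ENNReal.ofReal_toReal (measure_ne_top _ _)]
  rw [hRHS, Measure.map_apply hT measurableSet_Iic]
  rcases le_or_gt t 0 with ht | ht
  · rcases lt_or_eq_of_le ht with ht' | ht'
    · rw [if_neg (not_le.mpr ht')]
      rw [ENNReal.ofReal_zero]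
      refine measure_mono_null (fun ω hω => ?_) (ae_iff.mp hTpos)
      · simp only [mem_preimage, mem_Iic] at hω
        simp only [mem_setOf_eq, not_lt]
        exact le_trans hω ht'.le
    · subst ht'
      rw [if_pos le_rfl]
      simp only [mul_zero, neg_zero, Real.exp_zero, sub_self, ENNReal.ofReal_zero]
      refine measure_mono_null (fun ω hω => ?_) (ae_iff.mp hTpos)
      · simp only [mem_preimage, mem_Iic] at hω
        simp only [mem_setOf_eq, not_lt]
        exact hω
  · rw [if_pos ht.le]
    set y0 := t ^ (-α) with hy0def
    have hy0 : 0 < y0 := Real.rpow_pos_of_pos ht _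
    have hset : ((fun ω => X ω ^ (-(1/α))) ⁻¹' Iic t : Set Ω) =ᵐ[ℙ] {ω | y0 ≤ X ω} := by
      rw [Filter.eventuallyEq_set]
      refine hpos.mono fun ω hω => ?_
      simp only [mem_preimage, mem_Iic, mem_setOf_eq]
      have ht' : y0 ^ (-(1/α)) = t := by
        rw [hy0def, ← Real.rpow_mul ht.le,
          show (-α) * (-(1/α)) = 1 from by field_simp, Real.rpow_one]
      rw [← ht']
      exact Real.rpow_le_rpow_iff_of_neg hω hy0 (neg_lt_zero.mpr (by positivity))
    rw [measure_congr hset]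
    have hcompl : {ω | y0 ≤ X ω} = {ω | X ω < y0}ᶜ := by
      ext ω; simp [not_lt]
    have hms : MeasurableSet {ω | X ω < y0} := hm measurableSet_Iio
    rw [hcompl, measure_compl hms (measure_ne_top _ _), hcdf y0 hy0, measure_univ]
    have hexp : (c * y0) ^ (-(1/α)) = lam * t := by
      rw [Real.mul_rpow hc.le hy0.le, hy0def, ← Real.rpow_mul ht.le,
        show (-α) * (-(1/α)) = 1 from by field_simp, Real.rpow_one]
    rw [hexp, ENNReal.ofReal_sub _ (Real.exp_pos _).le, ENNReal.ofReal_one]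

lemma aux_integrable {a r : ℝ} (ha : 0 < a) (hr : 0 < r) :
    IntegrableOn (fun s : ℝ => s ^ (a-1) * Real.exp (-(r * s))) (Ioi 0) := by
  have h := integrableOn_rpow_mul_exp_neg_mul_rpow (by linarith : (-1:ℝ) < a - 1) zero_lt_one hr
  simpa [Real.rpow_one, neg_mul] using h

lemma aux_gamma_lintegral {a r : ℝ} (ha : 0 < a) (hr : 0 < r) :
    ∫⁻ s in Ioi 0, ENNReal.ofReal (s ^ (a-1) * Real.exp (-(r * s)))
      = ENNReal.ofReal ((1/r) ^ a * Real.Gamma a) := by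
  rw [← ofReal_integral_eq_lintegral_ofReal (aux_integrable ha hr)
      ((ae_restrict_mem measurableSet_Ioi).mono fun s hs =>
        mul_nonneg (Real.rpow_nonneg (le_of_lt hs) _) (Real.exp_pos _).le)]
  rw [integral_rpow_mul_exp_neg_mul_Ioi ha hr]

lemma aux_rpow_repr {a r : ℝ} (ha : 0 < a) (hr : 0 < r) :
    ENNReal.ofReal (r ^ (-a)) = (ENNReal.ofReal (Real.Gamma a))⁻¹
      * ∫⁻ s in Ioi 0, ENNReal.ofReal (s ^ (a-1) * Real.exp (-(r * s))) := by
  have hΓ : 0 < Real.Gamma a := Real.Gamma_pos_of_pos ha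
  rw [aux_gamma_lintegral ha hr, ENNReal.ofReal_mul (by positivity),
    mul_comm (ENNReal.ofReal ((1/r)^a)), ← mul_assoc,
    ENNReal.inv_mul_cancel (ENNReal.ofReal_pos.mpr hΓ).ne' ENNReal.ofReal_ne_top, one_mul]
  rw [one_div, Real.inv_rpow hr.le, ← Real.rpow_neg hr.le]

lemma aux_exp_laplace {lam : ℝ} (hlam : 0 < lam) {s : ℝ} (hs : 0 ≤ s) :
    ∫⁻ x, ENNReal.ofReal (Real.exp (-(s * x))) ∂(ProbabilityTheory.expMeasure lam)
      = ENNReal.ofReal (lam / (lam + s)) := by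
  have hls : 0 < lam + s := by linarith
  have hme : Measurable fun x : ℝ => ENNReal.ofReal (Real.exp (-(s * x))) := by fun_prop
  have hpdf : Measurable (exponentialPDF lam) :=
    (measurable_exponentialPDFReal lam).ennreal_ofReal
  have h0 : ProbabilityTheory.expMeasure lam = volume.withDensity (exponentialPDF lam) := rfl
  rw [h0, lintegral_withDensity_eq_lintegral_mul _ hpdf hme]
  rw [← lintegral_add_compl
    (fun x => (exponentialPDF lam * fun x => ENNReal.ofReal (Real.exp (-(s * x)))) x)
    (measurableSet_Ioi : MeasurableSet (Ioi (0:ℝ)))]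
  have hcompl : ∫⁻ x in (Ioi (0:ℝ))ᶜ,
      (exponentialPDF lam * fun x => ENNReal.ofReal (Real.exp (-(s * x)))) x = 0 := by
    rw [compl_Ioi, ← setLIntegral_congr (Iio_ae_eq_Iic (a := (0:ℝ)))]
    have hz : ∀ᵐ x ∂(volume.restrict (Iio (0:ℝ))),
        (exponentialPDF lam * fun x => ENNReal.ofReal (Real.exp (-(s * x)))) x = 0 :=
      (ae_restrict_mem measurableSet_Iio).mono fun x hx => by
        simp [Pi.mul_apply, exponentialPDF_of_neg hx]
    rw [lintegral_congr_ae hz, lintegral_zero]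
  rw [hcompl, add_zero]
  have hmain : ∫⁻ x in Ioi (0:ℝ),
      (exponentialPDF lam * fun x => ENNReal.ofReal (Real.exp (-(s * x)))) x
      = ∫⁻ x in Ioi (0:ℝ), ENNReal.ofReal (lam * Real.exp (-((lam + s) * x))) := by
    refine setLIntegral_congr_fun measurableSet_Ioi fun x (hx : 0 < x) => ?_
    rw [Pi.mul_apply, exponentialPDF_of_nonneg hx.le, ← ENNReal.ofReal_mul (by positivity)]
    congr 1
    rw [mul_assoc, ← Real.exp_add]
    congr 2
    ring
  rw [hmain, ← ofReal_integral_eq_lintegral_ofReal]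
  · rw [integral_const_mul]
    have h := integral_rpow_mul_exp_neg_mul_Ioi (zero_lt_one) hls
    simp only [sub_self, Real.rpow_zero, one_mul, Real.rpow_one, Real.Gamma_one, mul_one] at h
    rw [h]; rw [one_div, ← div_eq_mul_inv]
  · have h := (aux_integrable zero_lt_one hls).const_mul lam
    simpa [Real.rpow_zero, sub_self] using h
  · exact (ae_restrict_mem measurableSet_Ioi).mono fun x hx => by positivity




/-- For the `k`-variate symmetric logistic max-stable model with parameter `α ∈ (0,1]`,
whose spectral representation uses i.i.d. `Y j` with `P(Y < y) = exp(-(Γ(1-α)y)^{-1/α})`,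
the extremal concurrence probability `p = E[(∑ⱼ Y(sⱼ)^{-1/α})^{-α}]` equals
`Γ(k-α)/(Γ(k)Γ(1-α)) = ∏_{j=1}^{k-1} (1 - α/j)`. -/
theorem stmt4 {Ω : Type*} [MeasureSpace Ω] [IsProbabilityMeasure (ℙ : Measure Ω)]
    (k : ℕ) (hk : 2 ≤ k) (α : ℝ) (hα : α ∈ Set.Ioc (0:ℝ) 1)
    (Y : Fin k → Ω → ℝ) (hmeas : ∀ j, Measurable (Y j))
    (hindep : iIndepFun Y ℙ)
    (hpos : ∀ j, ∀ᵐ ω ∂ℙ, 0 < Y j ω)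
    (hcdf : ∀ j, ∀ y : ℝ, 0 < y →
      ℙ {ω | Y j ω < y}
        = ENNReal.ofReal (Real.exp (-(Real.Gamma (1 - α) * y) ^ (-(1/α))))) :
    (∫ ω, (∑ j, (Y j ω) ^ (-(1/α))) ^ (-α) ∂ℙ)
        = Real.Gamma (k - α) / (Real.Gamma k * Real.Gamma (1 - α))
      ∧ Real.Gamma (k - α) / (Real.Gamma k * Real.Gamma (1 - α))
        = ∏ j ∈ Finset.range (k - 1), (1 - α / (j + 1)) := by
  obtain ⟨hα0, hα1⟩ := hα
  rcases eq_or_lt_of_le hα1 with hα1 | hα1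
  · -- degenerate case α = 1 : hypotheses are contradictory
    exfalso
    set i : Fin k := ⟨0, by omega⟩
    have h1 : ∀ n : ℕ, ℙ {ω | Y i ω < 1/(n+1)} = 1 := by
      intro n
      rw [hcdf i _ (by positivity)]
      rw [hα1]
      rw [show (1:ℝ) - 1 = 0 from by norm_num]
      rw [Real.Gamma_zero, zero_mul, Real.zero_rpow (by norm_num), neg_zero,
        Real.exp_zero, ENNReal.ofReal_one]
    have hae : ∀ n : ℕ, ∀ᵐ ω ∂(ℙ : Measure Ω), Y i ω < 1/(n+1) := by
      intro n
      have hms : MeasurableSet {ω | Y i ω < 1/(n+1)} := hmeas i measurableSet_Iio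
      have h2 := measure_compl (μ := (ℙ : Measure Ω)) hms (measure_ne_top _ _)
      rw [h1 n, measure_univ, tsub_self] at h2
      rw [ae_iff]
      convert h2 using 2
      rfl

    have hall : ∀ᵐ ω ∂(ℙ : Measure Ω), ∀ n : ℕ, Y i ω < 1/(n+1) := ae_all_iff.mpr hae
    have hfalse : ∀ᵐ ω ∂(ℙ : Measure Ω), False := by
      filter_upwards [hall, hpos i] with ω hω hωpos
      obtain ⟨n, hn⟩ := exists_nat_one_div_lt hωpos
      exact absurd (hω n) (not_lt.mpr (by exact_mod_cast hn.le))
    have : (ℙ : Measure Ω) univ = 0 := by simpa [ae_iff] using hfalse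
    simp [measure_univ] at this
  · -- main case α < 1
    have hc : (0:ℝ) < Real.Gamma (1 - α) := Real.Gamma_pos_of_pos (by linarith)
    set c := Real.Gamma (1 - α) with hcdef
    set lam := c ^ (-(1/α)) with hlamdef
    have hlam : 0 < lam := Real.rpow_pos_of_pos hc _
    have hk0 : (0:ℝ) < (k:ℝ) := by positivity
    have hk2 : (2:ℝ) ≤ (k:ℝ) := by exact_mod_cast hk
    have hkα : 0 < (k:ℝ) - α := by linarith
    have hΓα : 0 < Real.Gamma α := Real.Gamma_pos_of_pos hα0
    have hΓk : 0 < Real.Gamma (k:ℝ) := Real.Gamma_pos_of_pos hk0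
    have hΓkα : 0 < Real.Gamma ((k:ℝ) - α) := Real.Gamma_pos_of_pos hkα
    refine ⟨?_, aux_prod_part α hα0 hα1 k hk⟩
    set S : Ω → ℝ := fun ω => ∑ j, (Y j ω) ^ (-(1/α)) with hSdef
    have hSm : Measurable S := by
      apply Finset.measurable_sum
      intro j _
      fun_prop
    have hSpos : ∀ᵐ ω ∂(ℙ : Measure Ω), 0 < S ω := by
      have hall : ∀ᵐ ω ∂(ℙ : Measure Ω), ∀ j, 0 < Y j ω := ae_all_iff.mpr hpos
      haveI : Nonempty (Fin k) := ⟨⟨0, by omega⟩⟩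
      filter_upwards [hall] with ω hω
      exact Finset.sum_pos (fun j _ => Real.rpow_pos_of_pos (hω j) _) Finset.univ_nonempty
    -- the key lintegral computation
    have key : ∫⁻ ω, ENNReal.ofReal ((∑ j, (Y j ω) ^ (-(1/α))) ^ (-α)) ∂ℙ
        = ENNReal.ofReal (Real.Gamma ((k:ℝ) - α) / (Real.Gamma (k:ℝ) * c)) := by
      have hAne : (ENNReal.ofReal (Real.Gamma α))⁻¹ ≠ ⊤ :=
        ENNReal.inv_ne_top.mpr (ENNReal.ofReal_pos.mpr hΓα).ne'
      have step1 : ∫⁻ ω, ENNReal.ofReal ((∑ j, (Y j ω) ^ (-(1/α))) ^ (-α)) ∂ℙ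
          = ∫⁻ ω, (ENNReal.ofReal (Real.Gamma α))⁻¹
              * ∫⁻ s in Ioi 0, ENNReal.ofReal (s ^ (α-1) * Real.exp (-(S ω * s))) ∂ℙ :=
        lintegral_congr_ae (hSpos.mono fun ω hω => aux_rpow_repr hα0 hω)
      rw [step1, lintegral_const_mul' _ _ hAne]
      have hFm : Measurable (Function.uncurry fun (ω : Ω) (s : ℝ) =>
          ENNReal.ofReal (s ^ (α-1) * Real.exp (-(S ω * s)))) := by fun_prop
      rw [lintegral_lintegral_swap hFm.aemeasurable]
      -- evaluate the inner integral over ω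
      have inner1 : ∀ s ∈ Ioi (0:ℝ),
          ∫⁻ ω, ENNReal.ofReal (s ^ (α-1) * Real.exp (-(S ω * s))) ∂ℙ
            = ENNReal.ofReal (s ^ (α-1)) * ENNReal.ofReal (lam / (lam + s)) ^ k := by
        intro s hs
        rw [mem_Ioi] at hs
        have hptw : ∀ ω, ENNReal.ofReal (s ^ (α-1) * Real.exp (-(S ω * s)))
            = ENNReal.ofReal (s ^ (α-1))
              * ∏ j, ENNReal.ofReal (Real.exp (-(s * (Y j ω) ^ (-(1/α))))) := by
          intro ω
          rw [ENNReal.ofReal_mul (Real.rpow_nonneg hs.le _)]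
          congr 1
          rw [← ENNReal.ofReal_prod_of_nonneg (fun j _ => (Real.exp_pos _).le), ← Real.exp_sum]
          congr 1
          have hSω : S ω = ∑ j, (Y j ω) ^ (-(1/α)) := rfl
          rw [hSω, Finset.sum_mul, ← Finset.sum_neg_distrib]
          congr 1
          exact Finset.sum_congr rfl fun j _ => by ring
        simp_rw [hptw]
        rw [lintegral_const_mul' _ _ ENNReal.ofReal_ne_top]
        congr 1
        have hg : Measurable fun x : ℝ => ENNReal.ofReal (Real.exp (-(s * x ^ (-(1/α))))) := by
          fun_prop
        have hind2 : iIndepFun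
            (fun j ω => ENNReal.ofReal (Real.exp (-(s * (Y j ω) ^ (-(1/α)))))) ℙ :=
          hindep.comp (fun _ x => ENNReal.ofReal (Real.exp (-(s * x ^ (-(1/α)))))) fun _ => hg
        rw [aux_lintegral_prod_indep _ hind2 (fun j => hg.comp (hmeas j)) Finset.univ]
        have hfac : ∀ j : Fin k,
            ∫⁻ ω, ENNReal.ofReal (Real.exp (-(s * (Y j ω) ^ (-(1/α))))) ∂ℙ
              = ENNReal.ofReal (lam / (lam + s)) := by
          intro j
          have hmap := aux_law α hα0 hα1 (Y j) (hmeas j) (hpos j) (hcdf j)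
          have hT : Measurable (fun ω => (Y j ω) ^ (-(1/α))) := by fun_prop
          have hme : Measurable fun x : ℝ => ENNReal.ofReal (Real.exp (-(s * x))) := by fun_prop
          have h' : ∫⁻ x, ENNReal.ofReal (Real.exp (-(s * x)))
              ∂(Measure.map (fun ω => (Y j ω) ^ (-(1/α))) ℙ)
              = ENNReal.ofReal (lam / (lam + s)) := by
            rw [hmap]; exact aux_exp_laplace hlam hs.le
          exact ((lintegral_map hme hT).symm.trans h' :)
        rw [Finset.prod_congr rfl fun j _ => hfac j, Finset.prod_const, Finset.card_univ,
          Fintype.card_fin]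
      rw [setLIntegral_congr_fun measurableSet_Ioi inner1]
      -- rewrite using the Gamma-integral representation of (lam+s)^(-k)
      have inner2 : ∀ s ∈ Ioi (0:ℝ),
          ENNReal.ofReal (s ^ (α-1)) * ENNReal.ofReal (lam / (lam + s)) ^ k
            = (ENNReal.ofReal (lam ^ k) * (ENNReal.ofReal (Real.Gamma (k:ℝ)))⁻¹)
                * ∫⁻ t in Ioi 0,
                    ENNReal.ofReal (s ^ (α-1) * (t ^ ((k:ℝ)-1) * Real.exp (-((lam+s) * t)))) := by
        intro s hs
        rw [mem_Ioi] at hs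
        have hls : 0 < lam + s := by linarith
        have h1 : ENNReal.ofReal (lam / (lam + s)) ^ k
            = ENNReal.ofReal (lam ^ k) * ENNReal.ofReal ((lam + s) ^ (-(k:ℝ))) := by
          rw [← ENNReal.ofReal_pow (by positivity), ← ENNReal.ofReal_mul (by positivity)]
          congr 1
          rw [div_pow, Real.rpow_neg hls.le, Real.rpow_natCast]
          field_simp
        rw [h1, aux_rpow_repr hk0 hls]
        have h2 : ENNReal.ofReal (s ^ (α-1))
              * ∫⁻ t in Ioi 0, ENNReal.ofReal (t ^ ((k:ℝ)-1) * Real.exp (-((lam+s) * t)))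
            = ∫⁻ t in Ioi 0,
                ENNReal.ofReal (s ^ (α-1) * (t ^ ((k:ℝ)-1) * Real.exp (-((lam+s) * t)))) := by
          rw [← lintegral_const_mul' _ _ ENNReal.ofReal_ne_top]
          exact lintegral_congr fun t => (ENNReal.ofReal_mul (Real.rpow_nonneg hs.le _)).symm
        calc ENNReal.ofReal (s ^ (α-1)) * (ENNReal.ofReal (lam ^ k)
              * ((ENNReal.ofReal (Real.Gamma (k:ℝ)))⁻¹
                * ∫⁻ t in Ioi 0, ENNReal.ofReal (t ^ ((k:ℝ)-1) * Real.exp (-((lam+s) * t)))))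
            = (ENNReal.ofReal (lam ^ k) * (ENNReal.ofReal (Real.Gamma (k:ℝ)))⁻¹)
              * (ENNReal.ofReal (s ^ (α-1))
                * ∫⁻ t in Ioi 0, ENNReal.ofReal (t ^ ((k:ℝ)-1) * Real.exp (-((lam+s) * t)))) := by
              ring
          _ = _ := by rw [h2]
      rw [setLIntegral_congr_fun measurableSet_Ioi inner2]
      have hBne : ENNReal.ofReal (lam ^ k) * (ENNReal.ofReal (Real.Gamma (k:ℝ)))⁻¹ ≠ ⊤ :=
        ENNReal.mul_ne_top ENNReal.ofReal_ne_top
          (ENNReal.inv_ne_top.mpr (ENNReal.ofReal_pos.mpr hΓk).ne')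
      rw [lintegral_const_mul' _ _ hBne]
      have hGm : Measurable (Function.uncurry fun (s : ℝ) (t : ℝ) =>
          ENNReal.ofReal (s ^ (α-1) * (t ^ ((k:ℝ)-1) * Real.exp (-((lam+s) * t))))) := by
        fun_prop
      rw [lintegral_lintegral_swap hGm.aemeasurable]
      have inner3 : ∀ t ∈ Ioi (0:ℝ),
          ∫⁻ s in Ioi 0,
              ENNReal.ofReal (s ^ (α-1) * (t ^ ((k:ℝ)-1) * Real.exp (-((lam+s) * t))))
            = ENNReal.ofReal (Real.Gamma α)
                * ENNReal.ofReal (t ^ (((k:ℝ) - α) - 1) * Real.exp (-(lam * t))) := by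
        intro t ht
        rw [mem_Ioi] at ht
        have hptw : ∀ s ∈ Ioi (0:ℝ),
            ENNReal.ofReal (s ^ (α-1) * (t ^ ((k:ℝ)-1) * Real.exp (-((lam+s) * t))))
              = ENNReal.ofReal (t ^ ((k:ℝ)-1) * Real.exp (-(lam * t)))
                  * ENNReal.ofReal (s ^ (α-1) * Real.exp (-(t * s))) := by
          intro s hs
          rw [mem_Ioi] at hs
          rw [← ENNReal.ofReal_mul (by positivity)]
          congr 1
          rw [show -((lam+s) * t) = -(lam * t) + -(t * s) from by ring, Real.exp_add]
          ring
        rw [setLIntegral_congr_fun measurableSet_Ioi hptw,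
          lintegral_const_mul' _ _ ENNReal.ofReal_ne_top, aux_gamma_lintegral hα0 ht,
          ← ENNReal.ofReal_mul (by positivity), ← ENNReal.ofReal_mul (by positivity)]
        congr 1
        rw [one_div, Real.inv_rpow ht.le, ← Real.rpow_neg ht.le]
        rw [show t ^ ((k:ℝ)-1) * Real.exp (-(lam * t)) * (t ^ (-α) * Real.Gamma α)
            = Real.Gamma α * ((t ^ ((k:ℝ)-1) * t ^ (-α)) * Real.exp (-(lam * t))) from by ring]
        rw [← Real.rpow_add ht]
        ring_nf
      rw [setLIntegral_congr_fun measurableSet_Ioi inner3,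
        lintegral_const_mul' _ _ ENNReal.ofReal_ne_top, aux_gamma_lintegral hkα hlam]
      -- final constant computation
      rw [← ENNReal.ofReal_inv_of_pos hΓα, ← ENNReal.ofReal_inv_of_pos hΓk,
        ← ENNReal.ofReal_mul (by positivity), ← ENNReal.ofReal_mul (by positivity),
        ← ENNReal.ofReal_mul (by positivity), ← ENNReal.ofReal_mul (by positivity)]
      congr 1
      have hlamk : lam ^ k * (1/lam) ^ ((k:ℝ) - α) = 1/c := by
        rw [one_div, Real.inv_rpow hlam.le, ← Real.rpow_natCast lam k,
          ← Real.rpow_neg hlam.le, ← Real.rpow_add hlam,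
          show (k:ℝ) + -((k:ℝ) - α) = α from by ring, hlamdef,
          ← Real.rpow_mul hc.le, show -(1/α) * α = -1 from by field_simp,
          Real.rpow_neg_one, one_div]
      calc (Real.Gamma α)⁻¹ * (lam ^ k * (Real.Gamma (k:ℝ))⁻¹
            * (Real.Gamma α * ((1/lam) ^ ((k:ℝ) - α) * Real.Gamma ((k:ℝ) - α))))
          = ((Real.Gamma α)⁻¹ * Real.Gamma α)
              * ((lam ^ k * (1/lam) ^ ((k:ℝ) - α))
                * ((Real.Gamma (k:ℝ))⁻¹ * Real.Gamma ((k:ℝ) - α))) := by ring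
        _ = Real.Gamma ((k:ℝ) - α) / (Real.Gamma (k:ℝ) * c) := by
            rw [inv_mul_cancel₀ hΓα.ne', hlamk, one_mul]
            field_simp
    -- conclude for the Bochner integral
    have hnn : 0 ≤ᵐ[(ℙ : Measure Ω)] fun ω => (∑ j, (Y j ω) ^ (-(1/α))) ^ (-α) :=
      hSpos.mono fun ω hω => (Real.rpow_pos_of_pos hω _).le
    have hsm : AEStronglyMeasurable (fun ω => (∑ j, (Y j ω) ^ (-(1/α))) ^ (-α))
        (ℙ : Measure Ω) := by
      apply Measurable.aestronglyMeasurable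
      fun_prop
    rw [integral_eq_lintegral_of_nonneg_ae hnn hsm, key, ENNReal.toReal_ofReal (by positivity)]
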